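/- For all real x > 2, Li(x) < (1 + 4/log x)² · (x/log x). -/
import Mathlib


/-- The logarithmic integral `Li(x) := ∫₂ˣ dt / log t`. -/
noncomputable def Li (x : ℝ) : ℝ := ∫ t in (2:ℝ)..x, 1 / Real.log t

noncomputable def Ff (t : ℝ) : ℝ := (1 + 4 / Real.log t) ^ 2 * (t / Real.log t)

noncomputable def Fd (t : ℝ) : ℝ :=
  1 / Real.log t + 7 / (Real.log t) ^ 2 - 48 / (Real.log t) ^ 4

lemma invlog_contOn {a b : ℝ} (ha : 1 < a) :
    ContinuousOn (fun t : ℝ => 1 / Real.log t) (Set.Icc a b) := by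
  apply ContinuousOn.div continuousOn_const
  · exact Real.continuousOn_log.mono fun t ht => by
      have h1 : (1:ℝ) < t := lt_of_lt_of_le ha ht.1
      simp only [Set.mem_compl_iff, Set.mem_singleton_iff]
      intro h; rw [h] at h1; linarith
  · exact fun t ht => ne_of_gt (Real.log_pos (lt_of_lt_of_le ha ht.1))

lemma Fd_contOn {a b : ℝ} (ha : 1 < a) : ContinuousOn Fd (Set.Icc a b) := by
  have hlog : ContinuousOn Real.log (Set.Icc a b) :=
    Real.continuousOn_log.mono fun t ht => by
      have h1 : (1:ℝ) < t := lt_of_lt_of_le ha ht.1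
      simp only [Set.mem_compl_iff, Set.mem_singleton_iff]
      intro h; rw [h] at h1; linarith
  have hne : ∀ t ∈ Set.Icc a b, Real.log t ≠ 0 :=
    fun t ht => ne_of_gt (Real.log_pos (lt_of_lt_of_le ha ht.1))
  unfold Fd
  exact ((continuousOn_const.div hlog hne).add
    (continuousOn_const.div (hlog.pow 2) fun t ht => pow_ne_zero 2 (hne t ht))).sub
    (continuousOn_const.div (hlog.pow 4) fun t ht => pow_ne_zero 4 (hne t ht))

lemma hasDerivAt_Ff {t : ℝ} (ht : 1 < t) : HasDerivAt Ff (Fd t) t := by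
  have ht0 : t ≠ 0 := by linarith
  have hL : 0 < Real.log t := Real.log_pos ht
  have hL0 : Real.log t ≠ 0 := ne_of_gt hL
  have hlog : HasDerivAt Real.log t⁻¹ t := Real.hasDerivAt_log ht0
  have h1 : HasDerivAt (fun y => 1 + 4 / Real.log y)
      ((0 * Real.log t - 4 * t⁻¹) / (Real.log t) ^ 2) t :=
    ((hasDerivAt_const t (4:ℝ)).div hlog hL0).const_add 1
  have h2 := h1.pow 2
  have h3 : HasDerivAt (fun y => y / Real.log y)
      ((1 * Real.log t - t * t⁻¹) / (Real.log t) ^ 2) t :=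
    (hasDerivAt_id t).div hlog hL0
  have h4 := h2.mul h3
  have : HasDerivAt Ff
      ((2 * (1 + 4 / Real.log t) ^ 1 * ((0 * Real.log t - 4 * t⁻¹) / (Real.log t) ^ 2)) *
        (t / Real.log t) +
        (1 + 4 / Real.log t) ^ 2 * ((1 * Real.log t - t * t⁻¹) / (Real.log t) ^ 2)) t := h4
  convert this using 1
  unfold Fd
  field_simp
  ring

lemma Li_le {x : ℝ} (hx : 2 ≤ x) : Li x ≤ (x - 2) * (1 / Real.log 2) := by
  have hI : Set.uIcc (2:ℝ) x = Set.Icc 2 x := Set.uIcc_of_le hx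
  have hint : IntervalIntegrable (fun t : ℝ => 1 / Real.log t) MeasureTheory.volume 2 x := by
    apply ContinuousOn.intervalIntegrable
    rw [hI]; exact invlog_contOn one_lt_two
  have hintc : IntervalIntegrable (fun _ : ℝ => 1 / Real.log 2) MeasureTheory.volume 2 x :=
    intervalIntegrable_const
  have hmono := intervalIntegral.integral_mono_on hx hint hintc ?_
  · rw [intervalIntegral.integral_const] at hmono
    unfold Li
    simpa using hmono
  · intro t ht
    have hl2 : 0 < Real.log 2 := Real.log_pos one_lt_two
    have : Real.log 2 ≤ Real.log t := Real.log_le_log (by norm_num) ht.1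
    exact one_div_le_one_div_of_le hl2 this

lemma small_case {x : ℝ} (h2 : 2 < x) (h16 : x ≤ 16) :
    Li x < (1 + 4 / Real.log x) ^ 2 * (x / Real.log x) := by
  have hl2 : (0.6931471803:ℝ) < Real.log 2 := Real.log_two_gt_d9
  have hl2' : Real.log 2 < 0.6931471808 := Real.log_two_lt_d9
  set L := Real.log x with hLdef
  have hL0 : 0 < L := Real.log_pos (by linarith)
  have hL16 : L ≤ Real.log 16 := Real.log_le_log (by linarith) h16
  have h16eq : Real.log 16 = 4 * Real.log 2 := by
    rw [show (16:ℝ) = 2 ^ 4 by norm_num, Real.log_pow]; push_cast; ring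
  have hLlt : L < 2.78 := by rw [h16eq] at hL16; linarith
  have key : (1:ℝ) / Real.log 2 ≤ (1 + 4 / L) ^ 2 / L := by
    rw [div_le_div_iff₀ (by linarith) hL0]
    have hexp : (1 + 4 / L) ^ 2 = (L + 4) ^ 2 / L ^ 2 := by
      field_simp
    rw [hexp, div_mul_eq_mul_div, le_div_iff₀ (by positivity)]
    nlinarith [mul_nonneg (sub_nonneg.2 hLlt.le) (sq_nonneg L),
      mul_pos (sub_pos.2 hLlt) hL0, sq_nonneg L]
  have hx0 : 0 < x := by linarith
  calc Li x ≤ (x - 2) * (1 / Real.log 2) := Li_le (le_of_lt h2)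
    _ < x * (1 / Real.log 2) := by
        apply mul_lt_mul_of_pos_right (by linarith)
        positivity
    _ ≤ x * ((1 + 4 / L) ^ 2 / L) := by
        apply mul_le_mul_of_nonneg_left key (le_of_lt hx0)
    _ = (1 + 4 / L) ^ 2 * (x / L) := by ring

/-- For all real `x > 2`, `Li(x) < (1 + 4/log x)² · (x/log x)`. -/
theorem stmt13 (x : ℝ) (hx : 2 < x) :
    Li x < (1 + 4 / Real.log x) ^ 2 * (x / Real.log x) := by
  rcases le_or_gt x 16 with h | h
  · exact small_case hx h
  · have h16lt : (16:ℝ) < x := h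
    have h16le : (16:ℝ) ≤ x := le_of_lt h
    have hF16 : Li 16 < Ff 16 := small_case (by norm_num) le_rfl
    have hI : Set.uIcc (16:ℝ) x = Set.Icc 16 x := Set.uIcc_of_le h16le
    have hint1 : IntervalIntegrable (fun t : ℝ => 1 / Real.log t) MeasureTheory.volume 2 16 := by
      apply ContinuousOn.intervalIntegrable
      rw [Set.uIcc_of_le (by norm_num : (2:ℝ) ≤ 16)]
      exact invlog_contOn one_lt_two
    have hint2 : IntervalIntegrable (fun t : ℝ => 1 / Real.log t) MeasureTheory.volume 16 x := by
      apply ContinuousOn.intervalIntegrable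
      rw [hI]; exact invlog_contOn (by norm_num)
    have hintFd : IntervalIntegrable Fd MeasureTheory.volume 16 x := by
      apply ContinuousOn.intervalIntegrable
      rw [hI]; exact Fd_contOn (by norm_num)
    have hsplit : Li x = Li 16 + ∫ t in (16:ℝ)..x, 1 / Real.log t := by
      rw [Li, Li, intervalIntegral.integral_add_adjacent_intervals hint1 hint2]
    have hlog16 : (2.772:ℝ) < Real.log 16 := by
      have hl2 : (0.6931471803:ℝ) < Real.log 2 := Real.log_two_gt_d9
      have h16eq : Real.log 16 = 4 * Real.log 2 := by
        rw [show (16:ℝ) = 2 ^ 4 by norm_num, Real.log_pow]; push_cast; ring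
      rw [h16eq]; linarith
    have hkey : (∫ t in (16:ℝ)..x, 1 / Real.log t) ≤ ∫ t in (16:ℝ)..x, Fd t := by
      apply intervalIntegral.integral_mono_on h16le hint2 hintFd
      intro t ht
      have hLt : (2.772:ℝ) < Real.log t :=
        lt_of_lt_of_le hlog16 (Real.log_le_log (by norm_num) ht.1)
      have hLt0 : 0 < Real.log t := by linarith
      have hsq : (7.68:ℝ) < (Real.log t) ^ 2 := by nlinarith
      have h48 : 48 / (Real.log t) ^ 4 ≤ 7 / (Real.log t) ^ 2 := by
        rw [div_le_div_iff₀ (by positivity) (by positivity)]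
        nlinarith [mul_nonneg (sub_nonneg.2 hsq.le) (sq_nonneg (Real.log t))]
      unfold Fd; linarith
    have hftc : (∫ t in (16:ℝ)..x, Fd t) = Ff x - Ff 16 := by
      apply intervalIntegral.integral_eq_sub_of_hasDerivAt
      · intro t ht
        rw [hI] at ht
        exact hasDerivAt_Ff (by linarith [ht.1])
      · exact hintFd
    have hle : Li x ≤ Li 16 + (Ff x - Ff 16) := by
      rw [hsplit, ← hftc]; linarith
    show Li x < Ff x
    linarith
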